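/- Let H : [0,∞) → ℝ^{p×CN}, W : [0,∞) → ℝ^{C×p}, b : [0,∞) → ℝ^C be differentiable and satisfy H'(t) = −W(t)^⊤ Ã(t), W'(t) = −Ã(t) H(t)^⊤, b'(t) = −Ã(t) 1_{CN}, where Ã(t) := b(t)·1_{CN}^⊤ − I_C ⊗ 1_N^⊤, with initial conditions H(0) = H₀, W(0) = W₀, b(0) = 0. Then for all t ≥ 0: ‖(H(t), W(t)) − e^{√N·t}·Π_T(H₀, W₀)‖_E ≤ e^{1/(C√N)}·‖(H₀, W₀) − Π_T(H₀, W₀)‖_E, and b(t) = ((1 − e^{−CNt})/C)·1_C. -/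

import Mathlib

open Matrix Set

attribute [local instance] Matrix.normedAddCommGroup Matrix.normedSpace

noncomputable section

/-- Index set for the pair space `ℝ^{p×CN} ⊕ ℝ^{C×p}`; the `CN` columns are indexed
by `Fin C × Fin N`. -/
abbrev PairIdx (C N p : ℕ) := (Fin p × (Fin C × Fin N)) ⊕ (Fin C × Fin p)

/-- The pair space `ℝ^{p×CN} ⊕ ℝ^{C×p}` with the norm
`‖(H,W)‖_E² = ‖H‖_F² + ‖W‖_F²` induced by the Frobenius inner product. -/
abbrev PairSpace (C N p : ℕ) := EuclideanSpace ℝ (PairIdx C N p)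

/-- Embedding of a pair of matrices `(H, W)` into the pair space. -/
def emb {C N p : ℕ} (H : Matrix (Fin p) (Fin C × Fin N) ℝ)
    (W : Matrix (Fin C) (Fin p) ℝ) : PairSpace C N p :=
  WithLp.toLp 2 (fun i => Sum.elim (fun jcn => H jcn.1 jcn.2) (fun cj => W cj.1 cj.2) i)

/-- The subspace `T = {(H, W) : H = (1/√N)(W ⊗ 1_N)ᵀ, 1_Cᵀ W = 0}`. -/
def Tsub (C N p : ℕ) : Submodule ℝ (PairSpace C N p) where
  carrier := {x | (∀ (j : Fin p) (c : Fin C) (n : Fin N),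
      x (Sum.inl (j, (c, n))) = (Real.sqrt N)⁻¹ * x (Sum.inr (c, j))) ∧
    (∀ j : Fin p, ∑ c : Fin C, x (Sum.inr (c, j)) = 0)}
  add_mem' := by
    intro a b ha hb
    refine ⟨fun j c n => ?_, fun j => ?_⟩
    · simp only [PiLp.add_apply, ha.1 j c n, hb.1 j c n]; ring
    · simp only [PiLp.add_apply, Finset.sum_add_distrib, ha.2 j, hb.2 j]; ring
  zero_mem' := by
    refine ⟨fun j c n => ?_, fun j => ?_⟩
    · simp [PiLp.zero_apply]
    · simp [PiLp.zero_apply]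
  smul_mem' := by
    intro r a ha
    refine ⟨fun j c n => ?_, fun j => ?_⟩
    · simp only [PiLp.smul_apply, ha.1 j c n, smul_eq_mul]; ring
    · simp only [PiLp.smul_apply, smul_eq_mul, ← Finset.mul_sum, ha.2 j, mul_zero]

lemma scalar_key (C : ℕ) (hC : 0 < C) (σ μ : ℝ) (hσ0 : 0 ≤ σ)
    (a w : Fin C → ℝ) (h : ∀ c, a c + w c = μ) :
    2 * (∑ c, a c * w c) * C - 2 * (1 - σ) * ((∑ c, a c) * (∑ c, w c)) ≤
      σ * ((∑ c, (a c)^2) + ∑ c, (w c)^2) * C := by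
  have hw : ∀ c, w c = μ - a c := fun c => by linarith [h c]
  have hCR : (0:ℝ) < C := by exact_mod_cast hC
  set A := ∑ c, a c with hA
  set Q := ∑ c, (a c)^2 with hQdef
  have hQ : A^2 ≤ C * Q := by
    simpa [hA, hQdef] using sq_sum_le_card_mul_sum_sq (s := Finset.univ) (f := a)
  have h1 : ∑ c, a c * w c = A * μ - Q := by
    calc ∑ c, a c * w c = ∑ c, (a c * μ - (a c)^2) := by
          refine Finset.sum_congr rfl fun c _ => ?_; rw [hw c]; ring
      _ = A * μ - Q := by rw [Finset.sum_sub_distrib, ← Finset.sum_mul]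
  have h2 : ∑ c, w c = C * μ - A := by
    calc ∑ c, w c = ∑ _c : Fin C, μ - A := by
          rw [← Finset.sum_sub_distrib]; exact Finset.sum_congr rfl fun c _ => (hw c)
      _ = C * μ - A := by simp [mul_comm]
  have h3 : ∑ c, (w c)^2 = C * μ^2 - 2*μ*A + Q := by
    calc ∑ c, (w c)^2 = ∑ c, (μ^2 - 2*μ*(a c) + (a c)^2) := by
          refine Finset.sum_congr rfl fun c _ => ?_; rw [hw c]; ring
      _ = C * μ^2 - 2*μ*A + Q := by
          rw [Finset.sum_add_distrib, Finset.sum_sub_distrib, ← Finset.mul_sum, ← hA, ← hQdef]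
          simp [mul_comm, mul_assoc, mul_left_comm]
  rw [h1, h2, h3]
  nlinarith [sub_nonneg.2 hQ, mul_nonneg hσ0 (sub_nonneg.2 hQ),
    mul_nonneg hσ0 (sq_nonneg (2*A - C*μ)), sq_nonneg (2*A - C*μ)]

lemma perj (C N : ℕ) (hC : 0 < C) (ρ σ β : ℝ) (hρ : 0 < ρ) (hρ2 : ρ * ρ = N)
    (hσ0 : 0 ≤ σ) (hβ : β * C = 1 - σ)
    (h : Fin C → Fin N → ℝ) (w : Fin C → ℝ)
    (hconstr : ∀ c₁ c₂ : Fin C,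
      ρ⁻¹ * ((∑ n, h c₁ n) - ∑ n, h c₂ n) + (w c₁ - w c₂) = 0) :
    (∑ c, (w c - β * ∑ c', w c') * ∑ n, h c n) +
      (∑ c, ((∑ n, h c n) - β * ∑ c', ∑ n, h c' n) * w c)
      ≤ ρ * σ * ((∑ c, ∑ n, (h c n)^2) + ∑ c, (w c)^2) := by
  have hCR : (0:ℝ) < C := by exact_mod_cast hC
  have hρne : ρ ≠ 0 := hρ.ne'
  have c₀ : Fin C := ⟨0, hC⟩
  have hL : (∑ c, (w c - β * ∑ c', w c') * ∑ n, h c n) +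
      (∑ c, ((∑ n, h c n) - β * ∑ c', ∑ n, h c' n) * w c)
      = 2 * (∑ c, (∑ n, h c n) * w c) -
        2 * β * ((∑ c, ∑ n, h c n) * (∑ c, w c)) := by
    rw [Finset.sum_congr rfl (fun c _ => (by ring :
        (w c - β * ∑ c', w c') * (∑ n, h c n) =
        (∑ n, h c n) * w c - (β * ∑ c', w c') * ∑ n, h c n)),
      Finset.sum_congr rfl (fun c _ => (by ring :
        ((∑ n, h c n) - β * ∑ c', ∑ n, h c' n) * w c =
        (∑ n, h c n) * w c - (β * ∑ c', ∑ n, h c' n) * w c)),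
      Finset.sum_sub_distrib, Finset.sum_sub_distrib, ← Finset.mul_sum, ← Finset.mul_sum]
    ring
  have hconstr' : ∀ c, (fun c => ρ⁻¹ * ∑ n, h c n) c + w c =
      (fun c => ρ⁻¹ * ∑ n, h c n) c₀ + w c₀ := by
    intro c
    simp only
    linear_combination hconstr c c₀
  have hsc := scalar_key C hC σ (ρ⁻¹ * (∑ n, h c₀ n) + w c₀) hσ0
    (fun c => ρ⁻¹ * ∑ n, h c n) w hconstr'
  have e1 : ∑ c, (ρ⁻¹ * ∑ n, h c n) * w c = ρ⁻¹ * ∑ c, (∑ n, h c n) * w c := by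
    rw [Finset.mul_sum]; exact Finset.sum_congr rfl (fun c _ => by ring)
  have e2 : ∑ c, (ρ⁻¹ * ∑ n, h c n) = ρ⁻¹ * ∑ c, ∑ n, h c n := (Finset.mul_sum _ _ _).symm
  have e3 : ∑ c, (ρ⁻¹ * ∑ n, h c n)^2 = ρ⁻¹ * ρ⁻¹ * ∑ c, (∑ n, h c n)^2 := by
    rw [Finset.mul_sum]; exact Finset.sum_congr rfl (fun c _ => by ring)
  rw [e1, e2, e3] at hsc
  have cheb : ∑ c, (∑ n, h c n)^2 ≤ N * ∑ c, ∑ n, (h c n)^2 := by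
    calc ∑ c, (∑ n, h c n)^2 ≤ ∑ c, ((N:ℝ) * ∑ n, (h c n)^2) :=
          Finset.sum_le_sum (fun c _ => by
            simpa using sq_sum_le_card_mul_sum_sq (s := Finset.univ) (f := h c))
      _ = N * ∑ c, ∑ n, (h c n)^2 := (Finset.mul_sum _ _ _).symm
  have hNval : ρ⁻¹ * ρ⁻¹ * (N:ℝ) = 1 := by
    rw [← hρ2]; field_simp
  have cheb' : ρ⁻¹ * ρ⁻¹ * ∑ c, (∑ n, h c n)^2 ≤ ∑ c, ∑ n, (h c n)^2 := by
    calc ρ⁻¹ * ρ⁻¹ * ∑ c, (∑ n, h c n)^2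
        ≤ ρ⁻¹ * ρ⁻¹ * ((N:ℝ) * ∑ c, ∑ n, (h c n)^2) := by
          apply mul_le_mul_of_nonneg_left cheb (by positivity)
      _ = ∑ c, ∑ n, (h c n)^2 := by rw [← mul_assoc, hNval, one_mul]
  have hsc3 : 2 * (ρ⁻¹ * ∑ c, (∑ n, h c n) * w c) * C -
      2 * (1 - σ) * ((ρ⁻¹ * ∑ c, ∑ n, h c n) * ∑ c, w c)
      ≤ σ * ((∑ c, ∑ n, (h c n)^2) + ∑ c, (w c)^2) * C := by
    refine hsc.trans ?_
    have := mul_le_mul_of_nonneg_right (mul_le_mul_of_nonneg_left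
      (add_le_add_left cheb' (∑ c, (w c)^2)) hσ0) hCR.le
    exact this
  have final := mul_le_mul_of_nonneg_left hsc3 (show (0:ℝ) ≤ ρ / C by positivity)
  have idL : ρ / C * (2 * (ρ⁻¹ * ∑ c, (∑ n, h c n) * w c) * C -
      2 * (1 - σ) * ((ρ⁻¹ * ∑ c, ∑ n, h c n) * ∑ c, w c))
      = 2 * (∑ c, (∑ n, h c n) * w c) -
        2 * β * ((∑ c, ∑ n, h c n) * (∑ c, w c)) := by
    field_simp
    linear_combination ((∑ c, ∑ n, h c n) * (∑ c, w c)) * hβ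
  have idR : ρ / C * (σ * ((∑ c, ∑ n, (h c n)^2) + ∑ c, (w c)^2) * C)
      = ρ * σ * ((∑ c, ∑ n, (h c n)^2) + ∑ c, (w c)^2) := by
    field_simp
  rw [hL, ← idL, ← idR]
  exact final

set_option maxHeartbeats 2000000 in
/-- Let `H, W, b` evolve by the modified gradient flow
`H' = -Wᵀ Ã`, `W' = -Ã Hᵀ`, `b' = -Ã 1_{CN}` with `Ã(t) = b(t) 1_{CN}ᵀ - I_C ⊗ 1_Nᵀ`,
`H(0) = H₀`, `W(0) = W₀`, `b(0) = 0`.  Then for all `t ≥ 0`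
`‖(H(t),W(t)) - e^{√N t} Π_T(H₀,W₀)‖_E ≤ e^{1/(C√N)} ‖(H₀,W₀) - Π_T(H₀,W₀)‖_E`
and `b(t) = ((1 - e^{-CNt})/C) 1_C`, where `Π_T` is the orthogonal projection onto `T`. -/
theorem initial_growth (C N p : ℕ) (hC : 0 < C) (hN : 0 < N) (hp : 0 < p)
    (H₀ : Matrix (Fin p) (Fin C × Fin N) ℝ) (W₀ : Matrix (Fin C) (Fin p) ℝ)
    (H : ℝ → Matrix (Fin p) (Fin C × Fin N) ℝ)
    (W : ℝ → Matrix (Fin C) (Fin p) ℝ)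
    (b : ℝ → (Fin C → ℝ))
    (Atil : ℝ → Matrix (Fin C) (Fin C × Fin N) ℝ)
    (hA : ∀ t, Atil t = Matrix.of (fun c (cn : Fin C × Fin N) =>
      b t c - if cn.1 = c then 1 else 0))
    (hH0 : H 0 = H₀) (hW0 : W 0 = W₀) (hb0 : b 0 = 0)
    (hH' : ∀ t ∈ Ici (0 : ℝ), HasDerivWithinAt H (-((W t)ᵀ * Atil t)) (Ici 0) t)
    (hW' : ∀ t ∈ Ici (0 : ℝ), HasDerivWithinAt W (-(Atil t * (H t)ᵀ)) (Ici 0) t)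
    (hb' : ∀ t ∈ Ici (0 : ℝ), HasDerivWithinAt b
      (fun c => -(∑ cn : Fin C × Fin N, Atil t c cn)) (Ici 0) t) :
    ∀ t ∈ Ici (0 : ℝ),
      ‖emb (H t) (W t) - Real.exp (Real.sqrt N * t) •
          (Submodule.orthogonalProjectionOnto (Tsub C N p) (emb H₀ W₀) : PairSpace C N p)‖
        ≤ Real.exp (1 / (C * Real.sqrt N)) *
          ‖emb H₀ W₀ - (Submodule.orthogonalProjectionOnto (Tsub C N p) (emb H₀ W₀) : PairSpace C N p)‖ ∧
      b t = fun _ => (1 - Real.exp (-(C * N : ℝ) * t)) / C := by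
  have hCR : (0:ℝ) < C := by exact_mod_cast hC
  have hNR : (0:ℝ) < N := by exact_mod_cast hN
  have hsN : (0:ℝ) < Real.sqrt N := Real.sqrt_pos.2 hNR
  have hsN2 : Real.sqrt N * Real.sqrt N = (N:ℝ) := Real.mul_self_sqrt hNR.le
  have hsNinv : Real.sqrt N * (Real.sqrt N)⁻¹ = 1 := mul_inv_cancel₀ hsN.ne'
  have hNs : (N:ℝ) * (Real.sqrt N)⁻¹ = Real.sqrt N := by
    nth_rewrite 1 [← hsN2]
    rw [mul_assoc, hsNinv, mul_one]
  -- ### Part 1 : the explicit solution for b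
  have hbsum : ∀ t (c : Fin C), (∑ cn : Fin C × Fin N, Atil t c cn) = C * N * b t c - N := by
    intro t c
    rw [hA]
    calc (∑ cn : Fin C × Fin N, ((b t c - if cn.1 = c then 1 else 0 : ℝ)))
        = ∑ c' : Fin C, ∑ _n : Fin N, ((b t c - if c' = c then 1 else 0 : ℝ)) :=
          Fintype.sum_prod_type _
      _ = ∑ c' : Fin C, ((N : ℝ) * b t c - N * if c' = c then 1 else 0) := by
          refine Finset.sum_congr rfl fun c' _ => ?_
          rw [Finset.sum_const]; simp [nsmul_eq_mul, mul_ite, mul_one, mul_zero, mul_sub]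
      _ = C * N * b t c - N := by
          rw [Finset.sum_sub_distrib, Finset.sum_const, ← Finset.mul_sum,
            Finset.sum_ite_eq' Finset.univ c (fun _ => (1:ℝ))]
          simp [nsmul_eq_mul]; ring
  have hbeq : ∀ t ∈ Ici (0:ℝ), ∀ c, b t c = (1 - Real.exp (-(C * N : ℝ) * t)) / C := by
    intro t₁ ht₁ c
    have hbc : ∀ t ∈ Ici (0:ℝ), HasDerivWithinAt (fun t => b t c)
        (N - C * N * b t c) (Ici 0) t := by
      intro t ht
      have := hasDerivWithinAt_pi.1 (hb' t ht) c
      rw [hbsum t c] at this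
      simpa [neg_sub] using this
    set f : ℝ → ℝ := fun t => Real.exp (C*N*t) * (C * b t c - 1) with hf
    have hfd : ∀ t ∈ Ici (0:ℝ), HasDerivWithinAt f 0 (Ici 0) t := by
      intro t ht
      have he : HasDerivAt (fun t : ℝ => Real.exp (C*N*t)) (Real.exp (C*N*t) * (C*N)) t := by
        simpa using (((hasDerivAt_id t).const_mul ((C:ℝ)*N)).exp)
      have hg : HasDerivWithinAt (fun t => (C:ℝ) * b t c - 1) (C * (N - C*N*b t c)) (Ici 0) t :=
        (((hbc t ht).const_mul (C:ℝ))).sub_const 1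
      have := (he.hasDerivWithinAt.mul hg)
      exact this.congr_deriv (by ring)
    have key : f t₁ = f 0 := by
      rcases eq_or_lt_of_le (mem_Ici.1 ht₁) with h | h
      · rw [← h]
      · refine constant_of_has_deriv_right_zero (f := f) (a := 0) (b := t₁)
          (fun s hs => ((hfd s (Icc_subset_Ici_self hs)).continuousWithinAt).mono
            Icc_subset_Ici_self) (fun s hs => (hfd s (mem_Ici.2 hs.1) |>.mono
            (Ici_subset_Ici.2 hs.1))) t₁ (mem_Icc.2 ⟨h.le, le_rfl⟩)
    have h0 : f 0 = -1 := by simp [hf, hb0]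
    rw [h0, hf] at key
    have hexp : Real.exp ((C:ℝ)*N*t₁) ≠ 0 := Real.exp_ne_zero _
    have hthis : (C:ℝ) * b t₁ c - 1 = -Real.exp (-(C*N:ℝ)*t₁) := by
      rw [neg_mul, Real.exp_neg]
      field_simp at key ⊢
      linarith [key]
    rw [neg_mul] at hthis
    field_simp
    linarith [hthis]
  -- ### setup for the main estimate
  set x₀ : PairSpace C N p := emb H₀ W₀ with hx₀def
  set u₀ : PairSpace C N p := (Submodule.orthogonalProjectionOnto (Tsub C N p) x₀ : PairSpace C N p)
    with hu₀def
  have hmem : u₀ ∈ Tsub C N p := by rw [hu₀def]; exact (Submodule.orthogonalProjectionOnto (Tsub C N p) x₀).2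
  obtain ⟨hu1, hu2⟩ := hmem
  have hsum_u0 : ∀ (j : Fin p) (c : Fin C),
      ∑ n : Fin N, u₀ (Sum.inl (j,(c,n))) = Real.sqrt N * u₀ (Sum.inr (c,j)) := by
    intro j c
    rw [Finset.sum_congr rfl (fun n _ => hu1 j c n), Finset.sum_const]
    simp only [Finset.card_univ, Fintype.card_fin, nsmul_eq_mul]
    rw [← mul_assoc, hNs]
  set σf : ℝ → ℝ := fun t => Real.exp (-(C * N : ℝ) * t) with hσf
  set βf : ℝ → ℝ := fun t => (1 - σf t)/C with hβf
  set v : ℝ → PairSpace C N p :=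
    fun t => emb (H t) (W t) - Real.exp (Real.sqrt N * t) • u₀ with hvdef
  set D : ℝ → PairSpace C N p := fun t => WithLp.toLp 2 (fun i => Sum.elim
    (fun jcn => v t (Sum.inr (jcn.2.1, jcn.1)) - βf t * ∑ c', v t (Sum.inr (c', jcn.1)))
    (fun cj => (∑ n, v t (Sum.inl (cj.2, (cj.1, n)))) -
      βf t * ∑ c', ∑ n, v t (Sum.inl (cj.2, (c', n)))) i) with hDdef
  have hvappl : ∀ t (c : Fin C) (j : Fin p),
      v t (Sum.inr (c,j)) = W t c j - Real.exp (Real.sqrt N * t) * u₀ (Sum.inr (c,j)) := by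
    intro t c j; rfl
  have hvappl2 : ∀ t (j : Fin p) (c : Fin C) (n : Fin N),
      v t (Sum.inl (j,(c,n))) = H t j (c,n) -
        Real.exp (Real.sqrt N * t) * u₀ (Sum.inl (j,(c,n))) := by
    intro t j c n; rfl
  -- entry formulas for the right-hand sides
  have hHent : ∀ t ∈ Ici (0:ℝ), ∀ (j : Fin p) (c : Fin C) (n : Fin N),
      (-((W t)ᵀ * Atil t)) j (c,n) = W t c j - βf t * ∑ c', W t c' j := by
    intro t ht j c n
    rw [hA]
    simp only [Matrix.neg_apply, Matrix.mul_apply, Matrix.transpose_apply, Matrix.of_apply]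
    have hterm : ∀ c' : Fin C, W t c' j * (b t c' - if (c, n).1 = c' then 1 else 0)
        = W t c' j * βf t - (if c = c' then W t c' j else 0) := by
      intro c'
      rw [hbeq t ht c', hβf, hσf]
      by_cases h : c = c' <;> simp [h] <;> ring
    rw [Finset.sum_congr rfl (fun c' _ => hterm c'), Finset.sum_sub_distrib,
      ← Finset.sum_mul, Finset.sum_ite_eq Finset.univ c (fun c' => W t c' j)]
    simp only [Finset.mem_univ, if_true]
    ring
  have hWent : ∀ t ∈ Ici (0:ℝ), ∀ (c : Fin C) (j : Fin p),
      (-(Atil t * (H t)ᵀ)) c j = (∑ n, H t j (c,n)) - βf t * ∑ c', ∑ n, H t j (c',n) := by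
    intro t ht c j
    rw [hA]
    simp only [Matrix.neg_apply, Matrix.mul_apply, Matrix.transpose_apply, Matrix.of_apply]
    rw [Fintype.sum_prod_type]
    have hterm : ∀ c' : Fin C, ∀ n : Fin N, (b t c - if c' = c then 1 else 0) * H t j (c',n)
        = βf t * H t j (c',n) - (if c' = c then H t j (c',n) else 0) := by
      intro c' n
      rw [hbeq t ht c, hβf, hσf]
      by_cases h : c' = c <;> simp [h] <;> ring
    rw [Finset.sum_congr rfl (fun c' _ => Finset.sum_congr rfl (fun n _ => hterm c' n))]
    simp only [Finset.sum_sub_distrib, ← Finset.mul_sum, Finset.sum_ite_irrel,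
      Finset.sum_const_zero]
    rw [Finset.sum_ite_eq' Finset.univ c (fun c' => ∑ n, H t j (c',n))]
    simp only [Finset.mem_univ, if_true]
    ring
  -- per-coordinate derivative of v
  have hEd : ∀ t : ℝ, HasDerivAt (fun t => Real.exp (Real.sqrt N * t))
      (Real.sqrt N * Real.exp (Real.sqrt N * t)) t := by
    intro t
    simpa [mul_comm] using ((hasDerivAt_id t).const_mul (Real.sqrt N)).exp
  have hvco : ∀ t ∈ Ici (0:ℝ), ∀ i, HasDerivWithinAt (fun t => v t i) (D t i) (Ici 0) t := by
    intro t ht i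
    match i with
    | Sum.inl (j, (c, n)) =>
      have h1 : HasDerivWithinAt (fun t => H t j (c,n)) ((-((W t)ᵀ * Atil t)) j (c,n))
          (Ici 0) t :=
        hasDerivWithinAt_pi.1 (hasDerivWithinAt_pi.1 (hH' t ht) j) (c,n)
      have h2 := h1.sub (((hEd t).hasDerivWithinAt).mul_const (u₀ (Sum.inl (j,(c,n)))))
      have h3 : HasDerivWithinAt (fun t => v t (Sum.inl (j,(c,n))))
          ((-((W t)ᵀ * Atil t)) j (c,n) -
            Real.sqrt N * Real.exp (Real.sqrt N * t) * u₀ (Sum.inl (j,(c,n)))) (Ici 0) t := h2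
      convert h3 using 1
      rw [hHent t ht j c n]
      simp only [hDdef, Sum.elim_inl]
      rw [hvappl t c j]
      rw [Finset.sum_congr rfl (fun c' _ => hvappl t c' j), Finset.sum_sub_distrib,
        ← Finset.mul_sum, hu2 j, hu1 j c n]
      linear_combination (Real.exp (Real.sqrt N * t) * u₀ (Sum.inr (c, j))) * hsNinv
    | Sum.inr (c, j) =>
      have h1 : HasDerivWithinAt (fun t => W t c j) ((-(Atil t * (H t)ᵀ)) c j) (Ici 0) t :=
        hasDerivWithinAt_pi.1 (hasDerivWithinAt_pi.1 (hW' t ht) c) j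
      have h2 := h1.sub (((hEd t).hasDerivWithinAt).mul_const (u₀ (Sum.inr (c,j))))
      have h3 : HasDerivWithinAt (fun t => v t (Sum.inr (c,j)))
          ((-(Atil t * (H t)ᵀ)) c j -
            Real.sqrt N * Real.exp (Real.sqrt N * t) * u₀ (Sum.inr (c,j))) (Ici 0) t := h2
      convert h3 using 1
      rw [hWent t ht c j]
      simp only [hDdef, Sum.elim_inr]
      rw [Finset.sum_congr rfl (fun n _ => hvappl2 t j c n), Finset.sum_sub_distrib,
        ← Finset.mul_sum, hsum_u0 j c]
      rw [Finset.sum_congr rfl (fun c' _ =>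
        (Finset.sum_congr rfl (fun n _ => hvappl2 t j c' n)).trans
          (by rw [Finset.sum_sub_distrib, ← Finset.mul_sum, hsum_u0 j c']))]
      rw [Finset.sum_sub_distrib, ← Finset.mul_sum, ← Finset.mul_sum, hu2 j]
      ring
  -- PiLp-level derivative of v
  have hv' : ∀ t ∈ Ici (0:ℝ), HasDerivWithinAt v (D t) (Ici 0) t := by
    intro t ht
    have h1 : HasDerivWithinAt (fun t i => v t i) (fun i => D t i) (Ici 0) t :=
      hasDerivWithinAt_pi.2 (hvco t ht)
    exact (((PiLp.continuousLinearEquiv 2 ℝ (fun _ : PairIdx C N p => ℝ)).symm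
      : (∀ _ : PairIdx C N p, ℝ) →L[ℝ] PairSpace C N p)).hasFDerivAt.comp_hasDerivWithinAt t h1
  -- orthogonality to T is preserved along the flow
  have hperp : ∀ t ∈ Ici (0:ℝ), ∀ (j : Fin p) (c₁ c₂ : Fin C),
      (Real.sqrt N)⁻¹ * ((∑ n, v t (Sum.inl (j,(c₁,n)))) - ∑ n, v t (Sum.inl (j,(c₂,n))))
        + (v t (Sum.inr (c₁,j)) - v t (Sum.inr (c₂,j))) = 0 := by
    intro t₂ ht₂ j c₁ c₂
    set G : ℝ → ℝ := fun t => (Real.sqrt N)⁻¹ * ((∑ n, v t (Sum.inl (j,(c₁,n)))) -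
      ∑ n, v t (Sum.inl (j,(c₂,n)))) + (v t (Sum.inr (c₁,j)) - v t (Sum.inr (c₂,j)))
      with hGdef
    have hG' : ∀ t ∈ Ici (0:ℝ), HasDerivWithinAt G (Real.sqrt N * G t) (Ici 0) t := by
      intro t ht
      have hs1 : HasDerivWithinAt (fun t => ∑ n : Fin N, v t (Sum.inl (j,(c₁,n))))
          (∑ n : Fin N, D t (Sum.inl (j,(c₁,n)))) (Ici 0) t :=
        HasDerivWithinAt.fun_sum (fun n _ => hvco t ht _)
      have hs2 : HasDerivWithinAt (fun t => ∑ n : Fin N, v t (Sum.inl (j,(c₂,n))))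
          (∑ n : Fin N, D t (Sum.inl (j,(c₂,n)))) (Ici 0) t :=
        HasDerivWithinAt.fun_sum (fun n _ => hvco t ht _)
      have h := (((hs1.sub hs2).const_mul ((Real.sqrt N)⁻¹)).add
        ((hvco t ht (Sum.inr (c₁,j))).sub (hvco t ht (Sum.inr (c₂,j)))))
      refine h.congr_deriv (Eq.symm ?_)
      simp only [hGdef, hDdef, Sum.elim_inl, Sum.elim_inr, Finset.sum_const,
        Finset.card_univ, Fintype.card_fin, nsmul_eq_mul]
      linear_combination ((∑ n : Fin N, v t (Sum.inl (j,(c₁,n)))) -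
          ∑ n : Fin N, v t (Sum.inl (j,(c₂,n)))) * hsNinv -
        (v t (Sum.inr (c₁,j)) - v t (Sum.inr (c₂,j))) * hNs
    have hF' : ∀ t ∈ Ici (0:ℝ), HasDerivWithinAt
        (fun t => Real.exp (-Real.sqrt N * t) * G t) 0 (Ici 0) t := by
      intro t ht
      have he : HasDerivAt (fun t : ℝ => Real.exp (-Real.sqrt N * t))
          (Real.exp (-Real.sqrt N * t) * (-Real.sqrt N)) t := by
        simpa using ((hasDerivAt_id t).const_mul (-Real.sqrt N)).exp
      have h := he.hasDerivWithinAt.mul (hG' t ht)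
      exact h.congr_deriv (by ring)
    have hcst : Real.exp (-Real.sqrt N * t₂) * G t₂ = Real.exp (-Real.sqrt N * 0) * G 0 := by
      rcases eq_or_lt_of_le (mem_Ici.1 ht₂) with h | h
      · rw [← h]
      · exact constant_of_has_deriv_right_zero
          (fun s hs => ((hF' s (Icc_subset_Ici_self hs)).continuousWithinAt).mono
            Icc_subset_Ici_self)
          (fun s hs => (hF' s (mem_Ici.2 hs.1)).mono (Ici_subset_Ici.2 hs.1)) t₂
          (mem_Icc.2 ⟨h.le, le_rfl⟩)
    have hG0 : G 0 = 0 := by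
      have hv0 : v 0 = x₀ - u₀ := by
        rw [hvdef]
        simp [hH0, hW0, Real.exp_zero, hx₀def]
      set y : PairSpace C N p := WithLp.toLp 2 (fun i => Sum.elim
        (fun jcn => (Real.sqrt N)⁻¹ * (((if jcn.2.1 = c₁ then (1:ℝ) else 0) -
            (if jcn.2.1 = c₂ then 1 else 0)) * (if jcn.1 = j then 1 else 0)))
        (fun cj => ((if cj.1 = c₁ then (1:ℝ) else 0) - (if cj.1 = c₂ then 1 else 0)) *
            (if cj.2 = j then 1 else 0)) i) with hydef
      have hy : y ∈ Tsub C N p := by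
        constructor
        · intro j' c n; rfl
        · intro j'
          simp only [hydef, Sum.elim_inr, sub_mul, Finset.sum_sub_distrib, ite_mul, one_mul,
            zero_mul, Finset.sum_ite_eq', Finset.mem_univ, if_true]
          ring
      have horth := Submodule.starProjection_inner_eq_zero (K := Tsub C N p) x₀ y hy
      rw [Submodule.starProjection_apply, ← hu₀def, ← hv0, PiLp.inner_apply] at horth
      simp only [RCLike.inner_apply, starRingEnd_apply, star_trivial] at horth
      rw [Fintype.sum_sum_type] at horth
      simp only [hydef, Sum.elim_inl, Sum.elim_inr, Fintype.sum_prod_type, mul_ite, mul_one,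
        mul_zero, ite_mul, zero_mul, one_mul, sub_mul, mul_sub, Finset.sum_sub_distrib,
        Finset.sum_ite_eq', Finset.mem_univ, if_true, Finset.sum_const_zero,
        Finset.sum_ite_irrel] at horth
      have hcol : ∀ (c' : Fin C), (∑ x : Fin C, ∑ x_1 : Fin N,
          if x = c' then (Real.sqrt N)⁻¹ * v 0 (Sum.inl (j, x, x_1)) else 0)
          = (Real.sqrt N)⁻¹ * (∑ n : Fin N, v 0 (Sum.inl (j, c', n))) := by
        intro c'
        rw [Finset.sum_congr rfl (fun x _ => show (∑ x_1 : Fin N,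
            if x = c' then (Real.sqrt N)⁻¹ * v 0 (Sum.inl (j, x, x_1)) else 0)
            = if x = c' then ∑ x_1 : Fin N, (Real.sqrt N)⁻¹ * v 0 (Sum.inl (j, x, x_1)) else 0
          from by split_ifs <;> simp)]
        rw [Finset.sum_ite_eq' Finset.univ c'
          (fun x => ∑ x_1 : Fin N, (Real.sqrt N)⁻¹ * v 0 (Sum.inl (j, x, x_1)))]
        simp [Finset.mul_sum]
      rw [hcol c₁, hcol c₂] at horth
      simp only [hGdef]
      linear_combination horth
    rw [hG0, mul_zero] at hcst
    have hGz : G t₂ = 0 := by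
      rcases mul_eq_zero.1 hcst with h|h
      · exact absurd h (Real.exp_pos _).ne'
      · exact h
    simp only [hGdef] at hGz
    exact hGz
  -- inner products as coordinate sums
  have hinner : ∀ (x y : PairSpace C N p), (inner ℝ x y : ℝ) =
      (∑ jp : Fin p × (Fin C × Fin N), x (Sum.inl jp) * y (Sum.inl jp)) +
      ∑ cj : Fin C × Fin p, x (Sum.inr cj) * y (Sum.inr cj) := by
    intro x y
    rw [PiLp.inner_apply]
    simp only [RCLike.inner_apply, starRingEnd_apply, star_trivial]
    simp only [Fintype.sum_sum_type, mul_comm]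
  -- the quadratic-form bound
  have hform : ∀ t ∈ Ici (0:ℝ), (inner ℝ (D t) (v t) : ℝ) ≤
      Real.sqrt N * σf t * (inner ℝ (v t) (v t) : ℝ) := by
    intro t ht
    have hσ0 : 0 ≤ σf t := by rw [hσf]; positivity
    have hβC : βf t * C = 1 - σf t := by rw [hβf]; field_simp
    rw [hinner, hinner]
    have hD1 : (∑ jp : Fin p × (Fin C × Fin N), D t (Sum.inl jp) * v t (Sum.inl jp))
        = ∑ j : Fin p, ∑ c : Fin C, (v t (Sum.inr (c,j)) -
            βf t * ∑ c', v t (Sum.inr (c',j))) * ∑ n, v t (Sum.inl (j,(c,n))) := by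
      rw [Fintype.sum_prod_type]
      refine Finset.sum_congr rfl fun j _ => ?_
      rw [Fintype.sum_prod_type]
      refine Finset.sum_congr rfl fun c _ => ?_
      simp only [hDdef, Sum.elim_inl]
      rw [← Finset.mul_sum]
    have hD2 : (∑ cj : Fin C × Fin p, D t (Sum.inr cj) * v t (Sum.inr cj))
        = ∑ j : Fin p, ∑ c : Fin C, ((∑ n, v t (Sum.inl (j,(c,n)))) -
            βf t * ∑ c', ∑ n, v t (Sum.inl (j,(c',n)))) * v t (Sum.inr (c,j)) := by
      rw [Fintype.sum_prod_type, Finset.sum_comm]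
      exact Finset.sum_congr rfl fun j _ => Finset.sum_congr rfl fun c _ => by
        simp only [hDdef, Sum.elim_inr]
    have hV1 : (∑ jp : Fin p × (Fin C × Fin N), v t (Sum.inl jp) * v t (Sum.inl jp))
        = ∑ j : Fin p, ∑ c : Fin C, ∑ n, (v t (Sum.inl (j,(c,n))))^2 := by
      rw [Fintype.sum_prod_type]
      refine Finset.sum_congr rfl fun j _ => ?_
      rw [Fintype.sum_prod_type]
      exact Finset.sum_congr rfl fun c _ => Finset.sum_congr rfl fun n _ => (pow_two _).symm
    have hV2 : (∑ cj : Fin C × Fin p, v t (Sum.inr cj) * v t (Sum.inr cj))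
        = ∑ j : Fin p, ∑ c : Fin C, (v t (Sum.inr (c,j)))^2 := by
      rw [Fintype.sum_prod_type, Finset.sum_comm]
      exact Finset.sum_congr rfl fun j _ => Finset.sum_congr rfl fun c _ => (pow_two _).symm
    rw [hD1, hD2, hV1, hV2, ← Finset.sum_add_distrib, ← Finset.sum_add_distrib,
      Finset.mul_sum]
    refine Finset.sum_le_sum fun j _ => ?_
    exact perj C N hC (Real.sqrt N) (σf t) (βf t) hsN hsN2 hσ0 hβC
      (fun c n => v t (Sum.inl (j,(c,n)))) (fun c => v t (Sum.inr (c,j)))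
      (fun c₁ c₂ => hperp t ht j c₁ c₂)
  -- descent of the renormalised norm
  set r : ℝ → ℝ := fun t => Real.sqrt N * (1 - σf t) / (C * N) with hrdef
  set g : ℝ → PairSpace C N p := fun t => Real.exp (-(r t)) • v t with hgdef
  set gd : ℝ → PairSpace C N p := fun t =>
    Real.exp (-(r t)) • D t + (-(Real.sqrt N * σf t) * Real.exp (-(r t))) • v t with hgddef
  have hr' : ∀ t : ℝ, HasDerivAt r (Real.sqrt N * σf t) t := by
    intro t
    have hσ' : HasDerivAt σf (-(C*N:ℝ) * σf t) t := by
      have h0 : HasDerivAt (fun t : ℝ => Real.exp (-(C*N:ℝ)*t))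
          (Real.exp (-(C*N:ℝ)*t) * (-(C*N:ℝ))) t := by
        simpa using ((hasDerivAt_id t).const_mul (-(C*N:ℝ))).exp
      rw [hσf]
      simpa [mul_comm] using h0
    have h1 := (((hasDerivAt_const t (1:ℝ)).sub hσ').const_mul (Real.sqrt N)).div_const
      ((C:ℝ)*N)
    rw [hrdef]
    exact h1.congr_deriv (by field_simp; ring)
  have hg' : ∀ t ∈ Ici (0:ℝ), HasDerivWithinAt g (gd t) (Ici 0) t := by
    intro t ht
    have he : HasDerivAt (fun t => Real.exp (-(r t)))
        (-(Real.sqrt N * σf t) * Real.exp (-(r t))) t := by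
      simpa [mul_comm] using ((hr' t).neg).exp
    have h1 := (he.hasDerivWithinAt).smul (hv' t ht)
    rw [hgdef, hgddef]
    exact h1
  set φ : ℝ → ℝ := fun t => (inner ℝ (g t) (g t) : ℝ) with hφdef
  have hφ' : ∀ t ∈ Ici (0:ℝ), HasDerivWithinAt φ
      ((inner ℝ (g t) (gd t) : ℝ) + (inner ℝ (gd t) (g t) : ℝ)) (Ici 0) t := by
    intro t ht
    have h1 := (hg' t ht).inner ℝ (hg' t ht)
    rw [hφdef]
    exact h1
  have hφnonpos : ∀ t ∈ Ici (0:ℝ),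
      (inner ℝ (g t) (gd t) : ℝ) + (inner ℝ (gd t) (g t) : ℝ) ≤ 0 := by
    intro t ht
    have hf := hform t ht
    have he2 : (0:ℝ) < Real.exp (-(r t)) * Real.exp (-(r t)) := by positivity
    have key : (inner ℝ (g t) (gd t) : ℝ) + (inner ℝ (gd t) (g t) : ℝ) =
        2 * (Real.exp (-(r t)) * Real.exp (-(r t))) *
          ((inner ℝ (D t) (v t) : ℝ) - Real.sqrt N * σf t * (inner ℝ (v t) (v t) : ℝ)) := by
      rw [hgddef, hgdef]
      simp only [inner_add_left, inner_add_right, real_inner_smul_left, real_inner_smul_right,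
        real_inner_comm (v t) (D t)]
      ring
    rw [key]
    exact mul_nonpos_iff.2 (Or.inl ⟨by positivity, sub_nonpos.2 hf⟩)
  have hmono : ∀ t₁ ∈ Ici (0:ℝ), φ t₁ ≤ φ 0 := by
    intro t₁ ht₁
    rcases eq_or_lt_of_le (mem_Ici.1 ht₁) with h | h
    · rw [← h]
    · have hcont : ContinuousOn φ (Icc 0 t₁) := fun s hs =>
        ((hφ' s (Icc_subset_Ici_self hs)).continuousWithinAt).mono Icc_subset_Ici_self
      have hder : ∀ x ∈ interior (Icc (0:ℝ) t₁), HasDerivAt φ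
          ((inner ℝ (g x) (gd x) : ℝ) + (inner ℝ (gd x) (g x) : ℝ)) x := by
        intro x hx
        rw [interior_Icc] at hx
        exact (hφ' x (mem_Ici.2 hx.1.le)).hasDerivAt (Ici_mem_nhds hx.1)
      have hanti := antitoneOn_of_deriv_nonpos (convex_Icc 0 t₁) hcont
        (fun x hx => (hder x hx).differentiableAt.differentiableWithinAt)
        (fun x hx => by
          rw [(hder x hx).deriv]
          exact hφnonpos x (by rw [interior_Icc] at hx; exact mem_Ici.2 hx.1.le))
      exact hanti (mem_Icc.2 ⟨le_rfl, h.le⟩) (mem_Icc.2 ⟨h.le, le_rfl⟩) h.le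
  have hg0 : g 0 = v 0 := by
    rw [hgdef]
    simp [hrdef, hσf, Real.exp_zero]
  have hv0 : v 0 = x₀ - u₀ := by
    rw [hvdef]
    simp [hH0, hW0, hx₀def, Real.exp_zero]
  refine fun t₁ ht₁ => ⟨?_, ?_⟩
  · have hφle := hmono t₁ ht₁
    rw [hφdef] at hφle
    simp only at hφle
    rw [real_inner_self_eq_norm_sq, real_inner_self_eq_norm_sq, hg0, hv0] at hφle
    have h1 : ‖g t₁‖ ≤ ‖x₀ - u₀‖ := by
      nlinarith [norm_nonneg (g t₁), norm_nonneg (x₀ - u₀), hφle]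
    have h2 : ‖g t₁‖ = Real.exp (-(r t₁)) * ‖v t₁‖ := by
      rw [hgdef]
      simp [norm_smul, Real.abs_exp]
    have hr1 : r t₁ ≤ 1 / (C * Real.sqrt N) := by
      rw [hrdef]
      simp only
      have hσpos : 0 < σf t₁ := by rw [hσf]; positivity
      rw [div_le_div_iff₀ (by positivity) (by positivity)]
      calc Real.sqrt N * (1 - σf t₁) * ((C:ℝ) * Real.sqrt N)
          = (Real.sqrt N * Real.sqrt N) * ((C:ℝ) * (1 - σf t₁)) := by ring
        _ = (N:ℝ) * ((C:ℝ) * (1 - σf t₁)) := by rw [hsN2]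
        _ ≤ 1 * ((C:ℝ) * N) := by nlinarith [mul_pos hCR hNR, hσpos]
    have h3 : ‖v t₁‖ ≤ Real.exp (1/((C:ℝ)*Real.sqrt N)) * ‖x₀ - u₀‖ := by
      have hle : Real.exp (-(r t₁)) * ‖v t₁‖ ≤ ‖x₀ - u₀‖ := by rw [← h2]; exact h1
      calc ‖v t₁‖ = Real.exp (r t₁) * (Real.exp (-(r t₁)) * ‖v t₁‖) := by
            rw [← mul_assoc, ← Real.exp_add]
            simp
        _ ≤ Real.exp (r t₁) * ‖x₀ - u₀‖ :=
            mul_le_mul_of_nonneg_left hle (Real.exp_pos _).le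
        _ ≤ Real.exp (1/((C:ℝ)*Real.sqrt N)) * ‖x₀ - u₀‖ :=
            mul_le_mul_of_nonneg_right (Real.exp_le_exp.2 hr1) (norm_nonneg _)
    simpa [hvdef] using h3
  · funext c
    exact hbeq t₁ ht₁ c
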